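/- (Itoh condition for modular unwrapping) Let λ > 0 and let f : ℤ → ℝ be a sequence such that |f(k+1) − f(k)| < λ for all k. Then the first-order difference of f can be recovered from the modulo samples: for all k, Δf(k) := f(k+1) − f(k) = M_λ(M_λ(f(k+1)) − M_λ(f(k))). -/
import Mathlib


noncomputable def Mmod (lam g : ℝ) : ℝ := 2 * lam * (Int.fract (g / (2 * lam) + 1 / 2) - 1 / 2)

lemma Mmod_eq_sub (lam g : ℝ) (hlam : 0 < lam) :
    Mmod lam g = g - 2 * lam * ⌊g / (2 * lam) + 1 / 2⌋ := by
  have h2 : (2 : ℝ) * lam ≠ 0 := by positivity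
  unfold Mmod
  rw [Int.fract]
  field_simp
  ring

lemma Mmod_add_int_mul (lam g : ℝ) (hlam : 0 < lam) (n : ℤ) :
    Mmod lam (g + 2 * lam * n) = Mmod lam g := by
  have h2 : (2 : ℝ) * lam ≠ 0 := by positivity
  unfold Mmod
  have : (g + 2 * lam * n) / (2 * lam) + 1 / 2 = g / (2 * lam) + 1 / 2 + n := by
    field_simp; ring
  rw [this, Int.fract_add_intCast]

lemma Mmod_eq_self (lam g : ℝ) (hlam : 0 < lam) (h1 : -lam ≤ g) (h2 : g < lam) :
    Mmod lam g = g := by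
  have h2l : (0 : ℝ) < 2 * lam := by positivity
  have hfr : Int.fract (g / (2 * lam) + 1 / 2) = g / (2 * lam) + 1 / 2 := by
    apply Int.fract_eq_self.2
    constructor
    · have hd : (-(1:ℝ)/2) ≤ g / (2 * lam) := (le_div_iff₀ h2l).2 (by nlinarith)
      linarith
    · have hd : g / (2 * lam) < 1/2 := (div_lt_iff₀ h2l).2 (by nlinarith)
      linarith
  unfold Mmod
  rw [hfr]
  field_simp
  ring

theorem itoh_unwrapping (lam : ℝ) (hlam : 0 < lam) (f : ℤ → ℝ)
    (hItoh : ∀ k : ℤ, |f (k + 1) - f k| < lam) :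
    ∀ k : ℤ, f (k + 1) - f k = Mmod lam (Mmod lam (f (k + 1)) - Mmod lam (f k)) := by
  intro k
  set a := f (k + 1)
  set b := f k
  have h := hItoh k
  have h1 : -lam ≤ a - b := by
    have := abs_lt.1 h
    linarith [this.1]
  have h2 : a - b < lam := (abs_lt.1 h).2
  have ha := Mmod_eq_sub lam a hlam
  have hb := Mmod_eq_sub lam b hlam
  set n : ℤ := ⌊b / (2 * lam) + 1 / 2⌋ - ⌊a / (2 * lam) + 1 / 2⌋ with hn
  have key : Mmod lam a - Mmod lam b = (a - b) + 2 * lam * (n : ℝ) := by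
    rw [ha, hb, hn]
    push_cast
    ring
  rw [key, Mmod_add_int_mul lam (a - b) hlam, Mmod_eq_self lam (a - b) hlam h1 h2]
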